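/- With h(x) = ψ(x) - Γ(s(x)) where s(x) = L_f ψ(x) + α₁(ψ(x)) - ε, Γ(s) = ReLU(-C₁s³), C₁ > 0, ε > 0, ψ of relative degree 2: if s(x) ≥ 0 then h(x) = ψ(x) and L_f h(x) = L_f ψ(x). Moreover, assume the condition (h(x) = 0 ∧ L_g L_f ψ(x) = 0) → s(x) ≥ 0 holds at a point x. Then (h(x) = 0 ∧ L_g h(x) = 0) → L_f h(x) ≥ ε - α₁(0) = ε > 0. -/

import Mathlib

open Matrix

lemma gamma_deriv_zero (C₁ : ℝ) (hC : 0 < C₁) :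
    HasDerivAt (fun t : ℝ => max 0 (-(C₁ * t ^ 3))) 0 0 := by
  rw [hasDerivAt_iff_isLittleO]
  simp only [sub_zero, smul_zero]
  rw [Asymptotics.isLittleO_iff]
  intro c hc
  have hδ : 0 < Real.sqrt (c / C₁) := Real.sqrt_pos.2 (div_pos hc hC)
  filter_upwards [Metric.ball_mem_nhds (0:ℝ) hδ] with t ht
  simp only [Metric.mem_ball, Real.dist_eq, sub_zero] at ht
  have h1 : t ^ 2 < c / C₁ := by
    have := Real.sq_sqrt (le_of_lt (div_pos hc hC))
    nlinarith [abs_nonneg t, sq_abs t]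
  have h2 : |max 0 (-(C₁ * t ^ 3))| ≤ C₁ * |t| ^ 3 := by
    rw [abs_of_nonneg (le_max_left _ _)]
    rcases le_or_gt 0 t with h | h
    · have : -(C₁ * t ^ 3) ≤ 0 := by nlinarith [mul_nonneg hC.le (pow_nonneg h 3)]
      simp [max_eq_left this]
      positivity
    · rw [max_eq_right (by nlinarith [mul_pos (mul_pos (neg_pos.2 h) (neg_pos.2 h)) (neg_pos.2 h)])]
      rw [abs_of_neg h]; ring_nf; nlinarith
  calc ‖max 0 (-(C₁ * t ^ 3)) - max 0 (-(C₁ * 0 ^ 3))‖ = |max 0 (-(C₁ * t ^ 3))| := by norm_num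
    _ ≤ C₁ * |t| ^ 3 := h2
    _ ≤ c * ‖t‖ := by
        have : |t| ^ 3 = t ^ 2 * |t| := by rw [pow_succ, sq_abs]
        rw [this, Real.norm_eq_abs]
        have hcc : C₁ * t ^ 2 < c := (lt_div_iff₀' hC).1 h1
        nlinarith [mul_nonneg (abs_nonneg t) (sub_nonneg.2 hcc.le)]

/-- Core of Proposition 4: the rectified CBF condition implies the optimal-decay
CBF condition. -/
theorem stmt12 {n m : ℕ} (ψ : (Fin n → ℝ) → ℝ) (hψ : ContDiff ℝ 2 ψ)
    (f : (Fin n → ℝ) → (Fin n → ℝ)) (hf : ContDiff ℝ 1 f)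
    (g : (Fin n → ℝ) → Matrix (Fin n) (Fin m) ℝ)
    (hrel : ∀ x, ∀ u : Fin m → ℝ, fderiv ℝ ψ x (g x *ᵥ u) = 0)
    (α₁ : ℝ → ℝ) (hα₁ : ContDiff ℝ 1 α₁) (hm : StrictMono α₁) (h0 : α₁ 0 = 0)
    (ε C₁ : ℝ) (hε : 0 < ε) (hC : 0 < C₁)
    (Lfψ s h : (Fin n → ℝ) → ℝ)
    (hLf : ∀ x, Lfψ x = fderiv ℝ ψ x (f x))
    (hs : ∀ x, s x = Lfψ x + α₁ (ψ x) - ε)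
    (hdef : ∀ x, h x = ψ x - max 0 (-(C₁ * s x ^ 3))) :
    (∀ x, 0 ≤ s x → h x = ψ x ∧ fderiv ℝ h x (f x) = fderiv ℝ ψ x (f x)) ∧
      ∀ x, ((h x = 0 ∧ ∀ u : Fin m → ℝ, fderiv ℝ Lfψ x (g x *ᵥ u) = 0) → 0 ≤ s x) →
        (h x = 0 ∧ ∀ u : Fin m → ℝ, fderiv ℝ h x (g x *ᵥ u) = 0) →
          ε - α₁ 0 ≤ fderiv ℝ h x (f x) ∧ 0 < fderiv ℝ h x (f x) := by
  -- basic differentiability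
  have hψd : Differentiable ℝ ψ := hψ.differentiable (by norm_num)
  have hDψ : ContDiff ℝ 1 (fderiv ℝ ψ) := hψ.fderiv_right (by norm_num)
  have hLfψd : Differentiable ℝ Lfψ := by
    have : Lfψ = fun x => (fderiv ℝ ψ x) (f x) := funext hLf
    rw [this]
    exact (hDψ.differentiable one_ne_zero).clm_apply (hf.differentiable one_ne_zero)
  have hα₁d : Differentiable ℝ α₁ := hα₁.differentiable one_ne_zero
  have hsd : Differentiable ℝ s := by
    have : s = fun x => Lfψ x + α₁ (ψ x) - ε := funext hs
    rw [this]
    exact ((hLfψd.add (hα₁d.comp hψd)).sub_const ε)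
  have hsc : Continuous s := hsd.continuous
  have hheq : h = fun x => ψ x - max 0 (-(C₁ * s x ^ 3)) := funext hdef
  -- h equals ψ on {s ≥ 0}, pointwise
  have hval : ∀ x, 0 ≤ s x → h x = ψ x := by
    intro x hx
    rw [hdef x, max_eq_left (by nlinarith [mul_nonneg hC.le (pow_nonneg hx 3)]), sub_zero]
  -- fderiv of h on {s ≥ 0}
  have hfd : ∀ x, 0 ≤ s x → fderiv ℝ h x = fderiv ℝ ψ x := by
    intro x hx
    rcases lt_or_eq_of_le hx with hx' | hx'
    · -- s x > 0 : locally h = ψ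
      have hev : h =ᶠ[nhds x] ψ := by
        filter_upwards [hsc.continuousAt.preimage_mem_nhds (Ioi_mem_nhds hx')] with y hy
        exact hval y (le_of_lt hy)
      exact hev.fderiv_eq
    · -- s x = 0 : use derivative of Γ at 0
      have hΓ : HasDerivAt (fun t : ℝ => max 0 (-(C₁ * t ^ 3))) 0 (s x) := by
        rw [← hx']; exact gamma_deriv_zero C₁ hC
      have hcomp : HasFDerivAt (fun y => max 0 (-(C₁ * s y ^ 3))) ((0:ℝ) • fderiv ℝ s x) x :=
        hΓ.comp_hasFDerivAt x (hsd x).hasFDerivAt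
      have : HasFDerivAt h (fderiv ℝ ψ x - (0:ℝ) • fderiv ℝ s x) x := by
        rw [hheq]
        exact (hψd x).hasFDerivAt.sub hcomp
      rw [this.fderiv]
      simp
  refine ⟨fun x hx => ⟨hval x hx, by rw [hfd x hx]⟩, ?_⟩
  intro x hyp ⟨hh0, hLg⟩
  -- first show 0 ≤ s x
  have hsx : 0 ≤ s x := by
    by_contra hneg
    push_neg at hneg
    -- locally h = ψ + C₁ * s^3
    have hev : h =ᶠ[nhds x] fun y => ψ y + C₁ * s y ^ 3 := by
      filter_upwards [hsc.continuousAt.preimage_mem_nhds (Iio_mem_nhds hneg)] with y hy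
      have hy' : s y < 0 := hy
      rw [hdef y, max_eq_right (by nlinarith [mul_pos (mul_pos (neg_pos.2 hy') (neg_pos.2 hy')) (neg_pos.2 hy')] : (0:ℝ) ≤ -(C₁ * s y ^ 3))]
      ring
    -- fderiv of cube term
    have hcube : HasFDerivAt (fun y => C₁ * s y ^ 3) ((C₁ * (3 * s x ^ 2)) • fderiv ℝ s x) x := by
      have h1 : HasDerivAt (fun t : ℝ => C₁ * t ^ 3) (C₁ * (3 * s x ^ 2)) (s x) := by
        have := (hasDerivAt_pow 3 (s x)).const_mul C₁
        simpa using this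
      exact h1.comp_hasFDerivAt x (hsd x).hasFDerivAt
    have hDh : fderiv ℝ h x = fderiv ℝ ψ x + (C₁ * (3 * s x ^ 2)) • fderiv ℝ s x := by
      rw [hev.fderiv_eq]
      exact ((hψd x).hasFDerivAt.add hcube).fderiv
    -- fderiv of s applied to g x *ᵥ u
    have hDs : ∀ u : Fin m → ℝ, fderiv ℝ s x (g x *ᵥ u) = fderiv ℝ Lfψ x (g x *ᵥ u) := by
      intro u
      have hseq : s = fun y => Lfψ y + α₁ (ψ y) - ε := funext hs
      have hα : HasFDerivAt (fun y => α₁ (ψ y)) ((deriv α₁ (ψ x)) • fderiv ℝ ψ x) x :=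
        (hα₁d (ψ x)).hasDerivAt.comp_hasFDerivAt x (hψd x).hasFDerivAt
      have : HasFDerivAt s ((fderiv ℝ Lfψ x + (deriv α₁ (ψ x)) • fderiv ℝ ψ x)) x := by
        rw [hseq]
        exact ((hLfψd x).hasFDerivAt.add hα).sub_const ε
      rw [this.fderiv]
      simp [hrel x u]
    -- conclude L_g Lfψ = 0 and contradiction
    have hzero : ∀ u : Fin m → ℝ, fderiv ℝ Lfψ x (g x *ᵥ u) = 0 := by
      intro u
      have := hLg u
      rw [hDh] at this
      simp only [ContinuousLinearMap.add_apply, ContinuousLinearMap.coe_smul',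
        Pi.smul_apply, smul_eq_mul, hrel x u, zero_add] at this
      rw [hDs u] at this
      have hsq : 0 < s x ^ 2 := by nlinarith
      have hne : C₁ * (3 * s x ^ 2) ≠ 0 := ne_of_gt (by nlinarith)
      exact (mul_eq_zero.1 this).resolve_left hne
    exact absurd (hyp ⟨hh0, hzero⟩) (not_le.2 hneg)
  -- now conclude
  have hψ0 : ψ x = 0 := by rw [← hval x hsx, hh0]
  have hval2 : fderiv ℝ h x (f x) = Lfψ x := by rw [hfd x hsx, ← hLf x]
  have : Lfψ x = s x + ε := by rw [hs x, hψ0, h0]; ring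
  constructor
  · rw [hval2, this, h0]; linarith
  · rw [hval2, this]; linarith
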